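/- Any polygon P = (V_0, …, V_{n-1}) in ℝ² of dimension at most 1 (i.e., whose vertex set {V_0, …, V_{n-1}} has affine hull of dimension at most 1) is convex. -/

import Mathlib

open Set

noncomputable section

/-- The Euclidean plane. -/
abbrev Pl := EuclideanSpace ℝ (Fin 2)

/-- The `j`-th vertex of the polygon given by the list `L`, with indices taken
cyclically (so that `V_n = V_0`). -/
def vtx (L : List Pl) (j : ℕ) : Pl := L.getD (j % L.length) 0

/-- The set of vertices of the polygon `L`. -/
def vertexSet (L : List Pl) : Set Pl := {x | x ∈ L}

/-- The union of the edges `[V_i, V_{i+1}]`, `i = 0, …, n-1` (with `V_n = V_0`). -/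
def edg (L : List Pl) : Set Pl :=
  ⋃ i ∈ Finset.range L.length, segment ℝ (vtx L i) (vtx L (i + 1))

/-- A polygon is convex if the union of its edges coincides with the boundary of
the convex hull of its vertex set. -/
def IsConvexPolygon (L : List Pl) : Prop :=
  edg L = frontier (convexHull ℝ (vertexSet L))

/-- A polygon is quasi-convex if the union of its edges is contained in the boundary
of the convex hull of its vertex set. -/
def IsQuasiConvex (L : List Pl) : Prop :=
  edg L ⊆ frontier (convexHull ℝ (vertexSet L))

/-- A polygon is strict if any three of its vertices (with increasing indices)
are non-collinear. -/
def IsStrict (L : List Pl) : Prop :=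
  ∀ i j k : ℕ, i < j → j < k → k < L.length →
    ¬ Collinear ℝ ({vtx L i, vtx L j, vtx L k} : Set Pl)

/-- The points of `S` lie to one side of the segment `[A, B]`: there is a line
(the zero set of `f · = c` with `f ≠ 0`) containing `A` and `B` which is the
boundary of a closed half-plane `{x | f x ≤ c}` containing `S`. -/
def OneSide (A B : Pl) (S : Set Pl) : Prop :=
  ∃ (f : Pl →ₗ[ℝ] ℝ) (c : ℝ), f ≠ 0 ∧ f A = c ∧ f B = c ∧ ∀ p ∈ S, f p ≤ c

/-- `ℓ` is a line in the plane. -/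
def IsLine (ℓ : Set Pl) : Prop :=
  ∃ (f : Pl →ₗ[ℝ] ℝ) (c : ℝ), f ≠ 0 ∧ ℓ = {x | f x = c}

/-- The line `ℓ` is supporting to the set `S`: it meets `S` and is the boundary of
a closed half-plane containing `S`. -/
def IsSuppLine (ℓ S : Set Pl) : Prop :=
  (ℓ ∩ S).Nonempty ∧
    ∃ (f : Pl →ₗ[ℝ] ℝ) (c : ℝ), f ≠ 0 ∧ ℓ = {x | f x = c} ∧ ∀ x ∈ S, f x ≤ c

/-- The half-open segment `[A, B) = {(1-t)A + tB : 0 ≤ t < 1}` if `A ≠ B`,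
and `∅` if `A = B`. -/
def hseg (A B : Pl) : Set Pl :=
  {x | A ≠ B ∧ ∃ t : ℝ, 0 ≤ t ∧ t < 1 ∧ x = (1 - t) • A + t • B}

/-- A 2-polytope: a compact convex subset of the plane of dimension 2 whose set of
extreme points is finite. -/
def IsPolytope2 (K : Set Pl) : Prop :=
  IsCompact K ∧ Convex ℝ K ∧
    Module.finrank ℝ (affineSpan ℝ K).direction = 2 ∧
    (Set.extremePoints ℝ K).Finite

open scoped RealInnerProductSpace

-- preconnected subset of a segment containing both endpoints is the whole segment
lemma seg_subset_of_preconnected {A B : Pl} {E : Set Pl} (hE : IsPreconnected E)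
    (hEs : E ⊆ segment ℝ A B) (hA : A ∈ E) (hB : B ∈ E) : segment ℝ A B ⊆ E := by
  rcases eq_or_ne A B with rfl | hAB
  · rw [segment_same]; simpa using hA
  intro x hx
  by_contra hxE
  set g : Pl → ℝ := fun y => (inner ℝ (B - A) y : ℝ) with hg
  have hD : (0:ℝ) < (inner ℝ (B - A) (B - A) : ℝ) := by
    rw [real_inner_self_eq_norm_sq]
    exact pow_pos (norm_pos_iff.2 (sub_ne_zero.2 hAB.symm)) 2
  set D := (inner ℝ (B - A) (B - A) : ℝ)
  have hparam : ∀ y ∈ segment ℝ A B, ∃ s : ℝ, 0 ≤ s ∧ s ≤ 1 ∧ y = A + s • (B - A) := by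
    intro y hy
    obtain ⟨a, b, ha, hb, hab, hy⟩ := hy
    refine ⟨b, hb, by linarith, ?_⟩
    have ha' : a = 1 - b := by linarith
    rw [← hy, ha']; module
  have hgval : ∀ s : ℝ, g (A + s • (B - A)) = g A + s * D := by
    intro s
    simp only [hg, D, inner_add_right, real_inner_smul_right]
  obtain ⟨t, ht0, ht1, hxe⟩ := hparam x hx
  have ht0' : t ≠ 0 := by
    rintro rfl; simp at hxe; exact hxE (hxe ▸ hA)
  have ht1' : t ≠ 1 := by
    rintro rfl; rw [one_smul] at hxe
    have : x = B := by rw [hxe]; abel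
    exact hxE (this ▸ hB)
  set c := g A + t * D with hc
  have hcover : E ⊆ {y | g y < c} ∪ {y | c < g y} := by
    intro y hy
    obtain ⟨s, hs0, hs1, hye⟩ := hparam y (hEs hy)
    have hgy : g y = g A + s * D := by rw [hye, hgval]
    rcases lt_trichotomy s t with h | h | h
    · left; simp only [mem_setOf_eq, hgy, hc]; nlinarith
    · exfalso; rw [h] at hye; rw [← hxe] at hye; exact hxE (hye ▸ hy)
    · right; simp only [mem_setOf_eq, hgy, hc]; nlinarith
  have hgc : Continuous g := by
    simpa [hg] using (continuous_const.inner continuous_id : Continuous fun y : Pl => (inner ℝ (B - A) y : ℝ))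
  have h1 : IsOpen {y : Pl | g y < c} := isOpen_lt hgc continuous_const
  have h2 : IsOpen {y : Pl | c < g y} := isOpen_lt continuous_const hgc
  have hAU : A ∈ {y : Pl | g y < c} := by
    simp only [mem_setOf_eq, hc]
    nlinarith [lt_of_le_of_ne ht0 (Ne.symm ht0')]
  have hBV : B ∈ {y : Pl | c < g y} := by
    have : g B = g A + 1 * D := by
      have : B = A + (1:ℝ) • (B - A) := by module
      rw [this, hgval]
    simp only [mem_setOf_eq, hc, this]
    nlinarith [lt_of_le_of_ne ht1 ht1']
  obtain ⟨y, _, hy1, hy2⟩ := hE _ _ h1 h2 hcover ⟨A, hA, hAU⟩ ⟨B, hB, hBV⟩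
  simp only [mem_setOf_eq] at hy1 hy2
  linarith

lemma vtx_mem {L : List Pl} (hL : L ≠ []) (i : ℕ) : vtx L i ∈ vertexSet L := by
  have hn : 0 < L.length := List.length_pos_iff.2 hL
  have h : i % L.length < L.length := Nat.mod_lt _ hn
  show L.getD (i % L.length) 0 ∈ L
  rw [List.getD_eq_getElem _ _ h]
  exact List.getElem_mem h

lemma mem_edg {L : List Pl} {p : Pl} (hp : p ∈ vertexSet L) : p ∈ edg L := by
  obtain ⟨j, hj, hget⟩ := List.mem_iff_getElem.1 hp
  have hv : vtx L j = p := by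
    show L.getD (j % L.length) 0 = p
    rw [Nat.mod_eq_of_lt hj, List.getD_eq_getElem _ _ hj, hget]
  exact mem_iUnion₂.2 ⟨j, Finset.mem_range.2 hj, hv ▸ left_mem_segment ℝ _ _⟩

lemma vtx_mod (L : List Pl) (i : ℕ) : vtx L (i % L.length) = vtx L i := by
  unfold vtx
  rw [Nat.mod_mod_of_dvd i (dvd_refl L.length)]

/-- any polygon of dimension at most 1 is convex. -/
theorem stmt_2 (L : List Pl)
    (hdim : Module.finrank ℝ (affineSpan ℝ (vertexSet L)).direction ≤ 1) :
    IsConvexPolygon L := by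
  show edg L = frontier (convexHull ℝ (vertexSet L))
  classical
  have hfin : (vertexSet L).Finite := L.finite_toSet
  set K := convexHull ℝ (vertexSet L) with hKdef
  have hKconv : Convex ℝ K := convex_convexHull ℝ _
  have hKcl : IsClosed K := (hfin.isCompact_convexHull ℝ).isClosed
  have hint : interior K = ∅ := by
    rw [← not_nonempty_iff_eq_empty]
    intro hne
    rw [hKconv.interior_nonempty_iff_affineSpan_eq_top, hKdef, affineSpan_convexHull] at hne
    rw [hne, AffineSubspace.direction_top, finrank_top] at hdim
    rw [finrank_euclideanSpace_fin] at hdim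
    omega
  have hfr : frontier K = K := by
    rw [frontier, hKcl.closure_eq, hint, diff_empty]
  rw [hfr]
  rcases eq_or_ne L [] with rfl | hL
  · rw [hKdef]
    simp [edg, vertexSet]
  have hn : 0 < L.length := List.length_pos_iff.2 hL
  have hcol : Collinear ℝ (vertexSet L) := by
    rw [collinear_iff_finrank_le_one]
    rwa [direction_affineSpan] at hdim
  have hp₀ : vtx L 0 ∈ vertexSet L := vtx_mem hL 0
  obtain ⟨v, hv⟩ := (collinear_iff_of_mem hp₀).1 hcol
  obtain ⟨A, hA, hAmin⟩ :=
    Set.exists_min_image (vertexSet L) (fun y => (inner ℝ v y : ℝ)) hfin ⟨_, hp₀⟩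
  obtain ⟨B, hB, hBmax⟩ :=
    Set.exists_max_image (vertexSet L) (fun y => (inner ℝ v y : ℝ)) hfin ⟨_, hp₀⟩
  have hsub : vertexSet L ⊆ segment ℝ A B := by
    rcases eq_or_ne v 0 with rfl | hv0
    · intro p hp
      obtain ⟨r, hr⟩ := hv p hp
      obtain ⟨rA, hrA⟩ := hv A hA
      simp only [smul_zero, vadd_eq_add, zero_add] at hr hrA
      rw [hr, ← hrA]
      exact left_mem_segment ℝ A B
    · intro p hp
      obtain ⟨r, hr⟩ := hv p hp
      obtain ⟨a, ha⟩ := hv A hA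
      obtain ⟨b, hb⟩ := hv B hB
      have hD : (0:ℝ) < (inner ℝ v v : ℝ) := by
        rw [real_inner_self_eq_norm_sq]
        exact pow_pos (norm_pos_iff.2 hv0) 2
      have hip : ∀ (s : ℝ) (q : Pl), q = s • v +ᵥ vtx L 0 →
          (inner ℝ v q : ℝ) = s * (inner ℝ v v : ℝ) + (inner ℝ v (vtx L 0) : ℝ) := by
        intro s q hq
        rw [hq]
        simp only [vadd_eq_add, inner_add_right, real_inner_smul_right]
      have h1 : a ≤ r := by
        have h := hAmin p hp
        simp only [hip a A ha, hip r p hr] at h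
        nlinarith
      have h2 : r ≤ b := by
        have h := hBmax p hp
        simp only [hip b B hb, hip r p hr] at h
        nlinarith
      rcases eq_or_lt_of_le (h1.trans h2) with heq | hlt
      · have hra : r = a := le_antisymm (heq ▸ h2) h1
        rw [hr, hra, ← ha]
        exact left_mem_segment ℝ A B
      · set t := (r - a) / (b - a) with ht
        have hbapos : 0 < b - a := sub_pos.2 hlt
        have h3 : t * (b - a) = r - a := div_mul_cancel₀ _ hbapos.ne'
        refine ⟨1 - t, t, ?_, ?_, by ring, ?_⟩
        · have htle : t ≤ 1 := by rw [ht, div_le_one hbapos]; linarith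
          linarith
        · rw [ht]; exact div_nonneg (by linarith) hbapos.le
        · have hco : (1 - t) * a + t * b = r := by nlinarith [h3]
          rw [ha, hb, hr, ← hco]
          simp only [vadd_eq_add]
          module
  have hKseg : K = segment ℝ A B := by
    apply subset_antisymm
    · rw [hKdef]; exact convexHull_min hsub (convex_segment A B)
    · exact hKconv.segment_subset (subset_convexHull ℝ _ hA) (subset_convexHull ℝ _ hB)
  have hedgK : edg L ⊆ K := by
    intro x hx
    obtain ⟨i, hi, hxseg⟩ := mem_iUnion₂.1 hx
    exact hKconv.segment_subset (subset_convexHull ℝ _ (vtx_mem hL i))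
      (subset_convexHull ℝ _ (vtx_mem hL (i + 1))) hxseg
  have hchain : edg L = ⋃ i : ℕ, segment ℝ (vtx L i) (vtx L (i + 1)) := by
    apply subset_antisymm
    · exact iUnion₂_subset fun i _ =>
        subset_iUnion (fun i => segment ℝ (vtx L i) (vtx L (i + 1))) i
    · intro x hx
      obtain ⟨i, hxi⟩ := mem_iUnion.1 hx
      refine mem_iUnion₂.2 ⟨i % L.length, Finset.mem_range.2 (Nat.mod_lt _ hn), ?_⟩
      have e1 : vtx L (i % L.length) = vtx L i := vtx_mod L i
      have e2 : vtx L (i % L.length + 1) = vtx L (i + 1) := by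
        unfold vtx
        congr 1
        rw [Nat.add_mod, Nat.mod_mod_of_dvd i (dvd_refl L.length), ← Nat.add_mod]
      rw [e1, e2]
      exact hxi
  have hpre : IsPreconnected (edg L) := by
    rw [hchain]
    apply IsPreconnected.iUnion_of_chain
    · intro i
      exact (convex_segment _ _).isPreconnected
    · intro i
      exact ⟨vtx L (i + 1), right_mem_segment ℝ _ _, left_mem_segment ℝ _ _⟩
  refine subset_antisymm hedgK ?_
  rw [hKseg]
  exact seg_subset_of_preconnected hpre (hKseg ▸ hedgK) (mem_edg hA) (mem_edg hB)
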